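/- For every integer l ≥ 1, the series ∑_{k=0}^∞ c(l,k) converges and its sum equals 4/(l(l+1)(l+2)). -/

import Mathlib

open scoped Classical
open Filter Finset Topology

/-- The constants `c(l,k)`: `c(l,0) = c(0,k) = 0`,
`c(1,k) = (2k²+14k)/((k+1)(k+2)(k+3)(k+4))` for `k ≥ 1`, and for `l > 1`, `k > 0`,
`c(l,k) = c(l,k-1)·(l+k-1)/(2l+k+2) + c(l-1,k)·(l-1)/(2l+k+2)`. -/
noncomputable def c : ℕ → ℕ → ℝ
  | _, 0 => 0
  | 0, _ => 0
  | 1, k + 1 =>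
      (2 * ((k : ℝ) + 1) ^ 2 + 14 * ((k : ℝ) + 1)) /
        (((k : ℝ) + 2) * ((k : ℝ) + 3) * ((k : ℝ) + 4) * ((k : ℝ) + 5))
  | l + 2, k + 1 =>
      c (l + 2) k * ((l : ℝ) + (k : ℝ) + 2) / (2 * (l : ℝ) + (k : ℝ) + 7) +
      c (l + 1) (k + 1) * ((l : ℝ) + 1) / (2 * (l : ℝ) + (k : ℝ) + 7)
termination_by l k => (l, k)

lemma c_zero (l : ℕ) : c l 0 = 0 := by simp [c]

lemma c_one (k : ℕ) : c 1 (k+1) = (2 * ((k : ℝ) + 1) ^ 2 + 14 * ((k : ℝ) + 1)) /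
        (((k : ℝ) + 2) * ((k : ℝ) + 3) * ((k : ℝ) + 4) * ((k : ℝ) + 5)) := by rw [c]

lemma c_rec (l k : ℕ) : c (l+2) (k+1) =
      c (l + 2) k * ((l : ℝ) + (k : ℝ) + 2) / (2 * (l : ℝ) + (k : ℝ) + 7) +
      c (l + 1) (k + 1) * ((l : ℝ) + 1) / (2 * (l : ℝ) + (k : ℝ) + 7) := by rw [c]

lemma c_nonneg : ∀ l k, 0 ≤ c l k := by
  intro l k
  induction l, k using c.induct with
  | case1 x => rw [c_zero]
  | case2 x h =>
    cases x with
    | zero => simp [c_zero]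
    | succ n => simp [c]
  | case3 k => rw [c_one]; positivity
  | case4 l k h1 h2 =>
    rw [c_rec]
    have e1 : (0:ℝ) ≤ (l:ℝ) + (k:ℝ) + 2 := by positivity
    have e2 : (0:ℝ) ≤ 2*(l:ℝ) + (k:ℝ) + 7 := by positivity
    have e3 : (0:ℝ) ≤ (l:ℝ) + 1 := by positivity
    positivity

lemma c_key (l k : ℕ) :
    (2*(l:ℝ) + (k:ℝ) + 7) * c (l+2) (k+1)
      = ((l:ℝ) + (k:ℝ) + 2) * c (l+2) k + ((l:ℝ)+1) * c (l+1) (k+1) := by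
  have h : (2*(l:ℝ) + (k:ℝ) + 7) ≠ 0 := by positivity
  rw [c_rec]; field_simp

lemma c_star (l : ℕ) : ∀ n : ℕ,
    ((l:ℝ) + 2 + (n:ℝ)) * c (l+2) n + ((l:ℝ) + 4) * ∑ k ∈ Finset.range (n+1), c (l+2) k
      = ((l:ℝ) + 1) * ∑ k ∈ Finset.range (n+1), c (l+1) k := by
  intro n
  induction n with
  | zero => simp [c_zero]
  | succ n ih =>
    rw [Finset.sum_range_succ, Finset.sum_range_succ (f := fun k => c (l+1) k)]
    have key := c_key l n
    push_cast
    push_cast at ih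
    nlinarith [key, ih]

lemma c_base (n : ℕ) : ∑ k ∈ Finset.range (n+1), c 1 k
    = 2/3 + 2/((n:ℝ)+2) - 8/((n:ℝ)+3) + 4/((n:ℝ)+4) := by
  induction n with
  | zero => simp [c_zero]; norm_num
  | succ n ih =>
    rw [Finset.sum_range_succ, ih, c_one]
    have h2 : ((n:ℝ)+2) ≠ 0 := by positivity
    have h3 : ((n:ℝ)+3) ≠ 0 := by positivity
    have h4 : ((n:ℝ)+4) ≠ 0 := by positivity
    have h5 : ((n:ℝ)+5) ≠ 0 := by positivity
    push_cast
    field_simp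
    ring

lemma tendsto_aux (a b : ℝ) : Tendsto (fun n : ℕ => a / ((n:ℝ) + b)) atTop (𝓝 0) := by
  apply Filter.Tendsto.div_atTop (tendsto_const_nhds)
  exact tendsto_atTop_add_const_right _ b tendsto_natCast_atTop_atTop

lemma hasSum_one : HasSum (fun k => c 1 k) (2/3) := by
  rw [hasSum_iff_tendsto_nat_of_nonneg (fun k => c_nonneg 1 k)]
  rw [← Filter.tendsto_add_atTop_iff_nat 1]
  simp only [c_base]
  have h : Tendsto (fun n : ℕ => 2/3 + 2/((n:ℝ)+2) - 8/((n:ℝ)+3) + 4/((n:ℝ)+4)) atTop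
      (𝓝 (2/3 + 0 - 0 + 0)) :=
    ((tendsto_const_nhds.add (tendsto_aux 2 2)).sub (tendsto_aux 8 3)).add (tendsto_aux 4 4)
  simpa using h

lemma c_step (l : ℕ) (T : ℝ) (ih : HasSum (fun k => c (l+1) k) T) :
    HasSum (fun k => c (l+2) k) (((l:ℝ)+1) / ((l:ℝ)+4) * T) := by
  have hnn : ∀ k, 0 ≤ c (l+2) k := fun k => c_nonneg _ _
  have hnn1 : ∀ k, 0 ≤ c (l+1) k := fun k => c_nonneg _ _
  have hT : 0 ≤ T := ih.nonneg hnn1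
  have hTn : ∀ n, ∑ k ∈ Finset.range n, c (l+1) k ≤ T := fun n =>
    sum_le_hasSum _ (fun i _ => hnn1 i) ih
  have hbound : ∀ n, ∑ k ∈ Finset.range n, c (l+2) k ≤ ((l:ℝ)+1) * T := by
    intro n
    have h1 : ∑ k ∈ Finset.range n, c (l+2) k ≤ ∑ k ∈ Finset.range (n+1), c (l+2) k := by
      rw [Finset.sum_range_succ]; linarith [hnn n]
    have h2 := c_star l n
    have h3 := hTn (n+1)
    have h4 : (0:ℝ) ≤ ((l:ℝ) + 2 + (n:ℝ)) * c (l+2) n := by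
      have := hnn n; positivity
    have hSnn : (0:ℝ) ≤ ∑ k ∈ Finset.range (n+1), c (l+2) k :=
      Finset.sum_nonneg fun i _ => hnn i
    have hl0 : (0:ℝ) ≤ (l:ℝ) := Nat.cast_nonneg l
    nlinarith [hnn n, mul_nonneg hl0 hSnn, mul_nonneg hl0 hT]
  have hsum : Summable (fun k => c (l+2) k) := summable_of_sum_range_le hnn hbound
  set S := ∑' k, c (l+2) k with hSdef
  have hS : HasSum (fun k => c (l+2) k) S := hsum.hasSum
  -- limits of partial sums
  have hPS : Tendsto (fun n : ℕ => ∑ k ∈ Finset.range (n+1), c (l+2) k) atTop (𝓝 S) :=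
    hS.tendsto_sum_nat.comp (tendsto_add_atTop_nat 1)
  have hPT : Tendsto (fun n : ℕ => ∑ k ∈ Finset.range (n+1), c (l+1) k) atTop (𝓝 T) :=
    ih.tendsto_sum_nat.comp (tendsto_add_atTop_nat 1)
  set L := ((l:ℝ)+1) * T - ((l:ℝ)+4) * S with hLdef
  have hL : Tendsto (fun n : ℕ => ((l:ℝ) + 2 + (n:ℝ)) * c (l+2) n) atTop (𝓝 L) := by
    have : Tendsto (fun n : ℕ =>
        ((l:ℝ)+1) * ∑ k ∈ Finset.range (n+1), c (l+1) k
          - ((l:ℝ)+4) * ∑ k ∈ Finset.range (n+1), c (l+2) k) atTop (𝓝 L) :=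
      (hPT.const_mul _).sub (hPS.const_mul _)
    refine this.congr fun n => ?_
    have := c_star l n
    linarith
  have hL0 : L = 0 := by
    by_contra hne
    have hLpos : 0 < L := by
      rcases lt_or_gt_of_ne hne with h | h
      · exfalso
        have : 0 ≤ L := ge_of_tendsto' hL fun n => by
          have := hnn n; positivity
        linarith
      · exact h
    have hev : ∀ᶠ n : ℕ in atTop, L/2 ≤ ((l:ℝ) + 2 + (n:ℝ)) * c (l+2) n := by
      filter_upwards [hL.eventually (eventually_gt_nhds (show L/2 < L by linarith))] with n hn
      linarith
    obtain ⟨N, hN⟩ := hev.exists_forall_of_atTop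
    have hcomp : ∀ n : ℕ, L/2 * (1 / ((l:ℝ) + 2 + ((n:ℕ):ℝ) + (N:ℝ))) ≤ c (l+2) (n + N) := by
      intro n
      have h1 := hN (n + N) (Nat.le_add_left N n)
      have hpos : (0:ℝ) < (l:ℝ) + 2 + (n:ℝ) + (N:ℝ) := by positivity
      push_cast at h1
      rw [mul_one_div, div_le_iff₀ hpos]
      nlinarith [h1]
    have hsum2 : Summable (fun n : ℕ => c (l+2) (n + N)) :=
      (summable_nat_add_iff N).2 hsum
    have hsum3 : Summable (fun n : ℕ => L/2 * (1 / ((l:ℝ) + 2 + ((n:ℕ):ℝ) + (N:ℝ)))) :=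
      Summable.of_nonneg_of_le (fun n => by positivity) hcomp hsum2
    have hsum4 : Summable (fun n : ℕ => 1 / ((l:ℝ) + 2 + ((n:ℕ):ℝ) + (N:ℝ))) := by
      have := hsum3.mul_left (2/L)
      refine this.congr fun n => ?_
      field_simp
    have hsum5 : Summable (fun n : ℕ => 1 / (((n + (l + 2 + N) : ℕ)):ℝ)) := by
      refine hsum4.congr fun n => ?_
      push_cast
      ring_nf
    have hsum6 : Summable (fun n : ℕ => 1 / ((n:ℕ):ℝ)) :=
      (summable_nat_add_iff (l + 2 + N)).1 hsum5
    exact Real.not_summable_one_div_natCast hsum6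
  have hSval : S = ((l:ℝ)+1) / ((l:ℝ)+4) * T := by
    have h4 : ((l:ℝ)+4) ≠ 0 := by positivity
    field_simp
    linarith [hL0]
  rwa [hSval] at hS

/-- For every integer `l ≥ 1`, the series `∑_{k=0}^∞ c(l,k)` converges with sum
`4/(l(l+1)(l+2))`. -/
theorem row_sum_c :
    ∀ l : ℕ, 1 ≤ l →
      HasSum (fun k : ℕ => c l k)
        (4 / ((l : ℝ) * ((l : ℝ) + 1) * ((l : ℝ) + 2))) := by
  intro l hl
  induction l with
  | zero => omega
  | succ n ih =>
    cases n with
    | zero =>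
      convert hasSum_one using 1
      push_cast
      norm_num
    | succ m =>
      have ihm := ih (by omega)
      have h := c_step m _ ihm
      have heq : ((m:ℝ)+1) / ((m:ℝ)+4) *
            (4 / (((m+1:ℕ):ℝ) * (((m+1:ℕ):ℝ) + 1) * (((m+1:ℕ):ℝ) + 2)))
          = 4 / (((m+2:ℕ):ℝ) * (((m+2:ℕ):ℝ) + 1) * (((m+2:ℕ):ℝ) + 2)) := by
        push_cast
        have h1 : ((m:ℝ)+1) ≠ 0 := by positivity
        have h2 : ((m:ℝ)+2) ≠ 0 := by positivity
        have h3 : ((m:ℝ)+3) ≠ 0 := by positivity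
        have h4 : ((m:ℝ)+4) ≠ 0 := by positivity
        field_simp
        ring
      rw [heq] at h
      exact h
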